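/- Let C be an even chordless cycle of length 2n (n ≥ 3), viewed as a bipartite graph. The minimum number of edges that must be added to C to make it chordal bipartite is n − 2. -/

import Mathlib

/-- The cycle on the `2n` vertices `ZMod (2n)`, with `u ~ u + 1`. -/
def cycleGraph (n : ℕ) : SimpleGraph (ZMod (2 * n)) :=
  SimpleGraph.fromRel (fun u v => v = u + 1)

/-- Edges respect the natural bipartition of the even cycle (even/odd vertices). -/
def RespectsBipartition {n : ℕ} (H : SimpleGraph (ZMod (2 * n))) : Prop :=
  ∀ u v, H.Adj u v → ¬ (Even (ZMod.val u) ↔ Even (ZMod.val v))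

/-- A graph is chordal bipartite if every cycle of length at least `6` has a
chord: an edge of the graph joining two vertices of the cycle that is not an edge
of the cycle. -/
def ChordalBipartite {V : Type*} (H : SimpleGraph V) : Prop :=
  ∀ (v : V) (w : H.Walk v v), w.IsCycle → 6 ≤ w.length →
    ∃ a b, a ∈ w.support ∧ b ∈ w.support ∧ H.Adj a b ∧ s(a, b) ∉ w.edges

namespace MinChords

open SimpleGraph

/-! ### Generic walk lemmas -/

lemma walk_support_eq {V} {G : SimpleGraph V} {u v : V} (p : G.Walk u v) :
    p.support = (List.range (p.length+1)).map p.getVert := by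
  induction p with
  | nil => simp [Walk.getVert]
  | cons h q ih =>
    rw [Walk.support_cons, ih, Walk.length_cons,
      List.range_succ_eq_map (n := q.length + 1), List.map_cons, List.map_map]
    simp [Walk.getVert_cons_succ, Function.comp]

lemma walk_edges_eq {V} {G : SimpleGraph V} {u v : V} (p : G.Walk u v) :
    p.edges = (List.range p.length).map (fun i => s(p.getVert i, p.getVert (i+1))) := by
  induction p with
  | nil => simp
  | cons h q ih =>
    rw [Walk.edges_cons, ih, Walk.length_cons,
      List.range_succ_eq_map (n := q.length), List.map_cons, List.map_map]
    simp [Walk.getVert_cons_succ, Function.comp, Walk.getVert_zero]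

lemma getVert_mem_support {V} {G : SimpleGraph V} {u v : V} (p : G.Walk u v) {i : ℕ}
    (hi : i ≤ p.length) : p.getVert i ∈ p.support := by
  rw [walk_support_eq]
  exact List.mem_map_of_mem (List.mem_range.mpr (by omega))

lemma mem_edges_of_lt {V} {G : SimpleGraph V} {u v : V} (p : G.Walk u v) {i : ℕ}
    (hi : i < p.length) : s(p.getVert i, p.getVert (i+1)) ∈ p.edges := by
  rw [walk_edges_eq]
  exact List.mem_map_of_mem (List.mem_range.mpr hi)

lemma getVert_inj_of_tail_nodup {V} {G : SimpleGraph V} {x : V} {c : G.Walk x x}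
    (hnd : c.support.tail.Nodup) {i j : ℕ} (hi1 : 1 ≤ i) (hiL : i ≤ c.length)
    (hj1 : 1 ≤ j) (hjL : j ≤ c.length) (hg : c.getVert i = c.getVert j) : i = j := by
  have hs : c.support.tail = (List.range c.length).map (fun i => c.getVert (i+1)) := by
    rw [walk_support_eq, List.range_succ_eq_map, List.map_cons, List.tail_cons, List.map_map]
    rfl
  rw [hs] at hnd
  have h2 : i - 1 = j - 1 := by
    refine List.inj_on_of_nodup_map hnd (List.mem_range.mpr (by omega))
      (List.mem_range.mpr (by omega)) ?_
    simpa only [Nat.sub_add_cancel hi1, Nat.sub_add_cancel hj1] using hg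
  omega

lemma cycle_getVert_inj {V} {G : SimpleGraph V} {x : V} {c : G.Walk x x}
    (hc : c.IsCycle) {i j : ℕ} (hi1 : 1 ≤ i) (hiL : i ≤ c.length)
    (hj1 : 1 ≤ j) (hjL : j ≤ c.length) (hg : c.getVert i = c.getVert j) : i = j :=
  getVert_inj_of_tail_nodup hc.support_nodup hi1 hiL hj1 hjL hg

lemma isCycle_of_tail_nodup {V} {G : SimpleGraph V} {x : V} {c : G.Walk x x}
    (hl : 3 ≤ c.length) (hnd : c.support.tail.Nodup) : c.IsCycle := by
  have hL0 : c.getVert 0 = x := c.getVert_zero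
  have hLL : c.getVert c.length = x := c.getVert_length
  refine ⟨⟨⟨?_⟩, ?_⟩, hnd⟩
  · rw [walk_edges_eq]
    refine List.Nodup.map_on ?_ List.nodup_range
    intro i hi j hj hij
    rw [List.mem_range] at hi hj
    rw [Sym2.eq_iff] at hij
    rcases hij with ⟨h1, h2⟩ | ⟨h1, h2⟩
    · exact Nat.succ_injective
        (getVert_inj_of_tail_nodup hnd (by omega) (by omega) (by omega) (by omega) h2)
    · rcases Nat.eq_zero_or_pos i with hi0 | hi0 <;> rcases Nat.eq_zero_or_pos j with hj0 | hj0
      · omega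
      · subst hi0
        have e1 : j + 1 = c.length := getVert_inj_of_tail_nodup hnd (by omega) (by omega)
          (by omega) le_rfl (h1.symm.trans (hL0.trans hLL.symm))
        have e2 : 0 + 1 = j := getVert_inj_of_tail_nodup hnd (by omega) (by omega) (by omega)
          (by omega) h2
        omega
      · subst hj0
        have e1 : i + 1 = c.length := getVert_inj_of_tail_nodup hnd (by omega) (by omega)
          (by omega) le_rfl (h2.trans (hL0.trans hLL.symm))
        have e2 : i = 0 + 1 := getVert_inj_of_tail_nodup hnd (by omega) (by omega) (by omega)
          (by omega) h1
        omega
      · have e1 : i = j + 1 := getVert_inj_of_tail_nodup hnd (by omega) (by omega) (by omega)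
          (by omega) h1
        have e2 : i + 1 = j := getVert_inj_of_tail_nodup hnd (by omega) (by omega) (by omega)
          (by omega) h2
        omega
  · intro hnil
    rw [hnil] at hl
    simp at hl

/-- In a cycle based at `x`, any edge containing `x` is one of the two extreme edges. -/
lemma cycle_edge_at_start {V} {G : SimpleGraph V} {x : V} {c : G.Walk x x}
    (hc : c.IsCycle) {e : Sym2 V} (he : e ∈ c.edges) (hx : x ∈ e) :
    e = s(x, c.getVert 1) ∨ e = s(x, c.getVert (c.length - 1)) := by
  have hL := hc.three_le_length
  have hL0 : c.getVert 0 = x := c.getVert_zero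
  have hLL : c.getVert c.length = x := c.getVert_length
  rw [walk_edges_eq] at he
  obtain ⟨i, hi, rfl⟩ := List.mem_map.mp he
  rw [List.mem_range] at hi
  rw [Sym2.mem_iff] at hx
  rcases hx with hx | hx
  · rcases Nat.eq_zero_or_pos i with hi0 | hi0
    · subst hi0; rw [hL0]; exact Or.inl rfl
    · exact absurd (cycle_getVert_inj hc (by omega) (by omega) (by omega) le_rfl
        (hx.symm.trans hLL.symm)) (by omega)
  · rcases Nat.lt_or_ge (i+1) c.length with hi1 | hi1
    · exact absurd (cycle_getVert_inj hc (by omega) (by omega) (by omega) le_rfl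
        (hx.symm.trans hLL.symm)) (by omega)
    · have hiL : i = c.length - 1 := by omega
      subst hiL
      rw [← hx]
      right
      rw [Sym2.eq_swap]

lemma mem_support_closed_iff_tail {V} {G : SimpleGraph V} {v : V} {w : G.Walk v v}
    (hw : w ≠ Walk.nil) {z : V} : z ∈ w.support ↔ z ∈ w.support.tail := by
  constructor
  · intro hz
    rw [Walk.support_eq_cons, List.mem_cons] at hz
    rcases hz with rfl | hz
    · cases w with
      | nil => exact absurd rfl hw
      | cons h q => simp [Walk.support_cons]
    · exact hz
  · exact List.mem_of_mem_tail

lemma mem_support_rotate_iff {V} [DecidableEq V] {G : SimpleGraph V} {v x : V} {w : G.Walk v v}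
    (hw : w.IsCycle) (hx : x ∈ w.support) {z : V} :
    z ∈ (w.rotate x hx).support ↔ z ∈ w.support := by
  have h1 : (w.rotate x hx).IsCycle := hw.rotate hx
  rw [mem_support_closed_iff_tail h1.isCircuit.ne_nil,
    mem_support_closed_iff_tail hw.isCircuit.ne_nil]
  exact (w.support_rotate x hx).mem_iff

lemma length_rotate {V} [DecidableEq V] {G : SimpleGraph V} {v x : V} (w : G.Walk v v)
    (hx : x ∈ w.support) : (w.rotate x hx).length = w.length := by
  have := (w.rotate_edges x hx).perm.length_eq
  rwa [Walk.length_edges, Walk.length_edges] at this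

/-! ### Parity -/

lemma getVert_parity {n : ℕ} {H : SimpleGraph (ZMod (2*n))} (hb : RespectsBipartition H)
    {u v : ZMod (2*n)} (p : H.Walk u v) :
    ∀ k, k ≤ p.length → (Even ((p.getVert k).val) ↔ (Even u.val ↔ Even k)) := by
  induction p with
  | nil =>
    intro k hk
    have hk0 : k = 0 := by simpa using hk
    subst hk0; simp
  | cons h q ih =>
    intro k hk
    match k with
    | 0 => simp
    | (k+1) =>
      rw [Walk.getVert_cons_succ]
      have h1 := ih k (by simpa [Walk.length_cons] using hk)
      have h2 := hb _ _ h
      rw [Nat.even_add_one]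
      tauto

lemma length_odd_of_adj {n : ℕ} {H : SimpleGraph (ZMod (2*n))} (hb : RespectsBipartition H)
    {u v : ZMod (2*n)} (p : H.Walk u v) (h : H.Adj u v) : ¬ Even p.length := by
  have h1 := getVert_parity hb p p.length le_rfl
  rw [Walk.getVert_length] at h1
  have h2 := hb _ _ h
  tauto

/-! ### Edge counting -/

/-- The set of edges of `H` with both endpoints in `S`. -/
def ES {V : Type*} (H : SimpleGraph V) (S : Set V) : Set (Sym2 V) :=
  {e | e ∈ H.edgeSet ∧ ∀ x ∈ e, x ∈ S}

lemma trail_le_ES {n : ℕ} [NeZero (2*n)] {H : SimpleGraph (ZMod (2*n))} {v v' : ZMod (2*n)}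
    (w : H.Walk v v') (ht : w.IsTrail) :
    w.length ≤ (ES H {z | z ∈ w.support}).ncard := by
  classical
  have h1 : (↑w.edges.toFinset : Set (Sym2 (ZMod (2*n)))) ⊆ ES H {z | z ∈ w.support} := by
    intro e he
    rw [Finset.mem_coe, List.mem_toFinset] at he
    induction e with
    | h a b =>
      refine ⟨w.edges_subset_edgeSet he, ?_⟩
      intro x hxe
      rw [Sym2.mem_iff] at hxe
      rcases hxe with rfl | rfl
      · exact w.fst_mem_support_of_mem_edges he
      · exact w.snd_mem_support_of_mem_edges he
  calc w.length = w.edges.length := (Walk.length_edges w).symm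
    _ = w.edges.toFinset.card := (List.toFinset_card_of_nodup ht.edges_nodup).symm
    _ = (↑w.edges.toFinset : Set (Sym2 (ZMod (2*n)))).ncard := (Set.ncard_coe_finset _).symm
    _ ≤ (ES H {z | z ∈ w.support}).ncard := Set.ncard_le_ncard h1 (Set.toFinite _)

/-- Key lemma: a cycle of length `2a` in a chordal bipartite, bipartition-respecting
graph spans at least `3a - 2` edges. -/
lemma key {n : ℕ} (hn : 3 ≤ n) {H : SimpleGraph (ZMod (2*n))} (hb : RespectsBipartition H)
    (hcb : ChordalBipartite H) :
    ∀ a : ℕ, ∀ (v : ZMod (2*n)) (w : H.Walk v v), w.IsCycle → w.length = 2*a →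
      3*a ≤ (ES H {z | z ∈ w.support}).ncard + 2 := by
  haveI : NeZero (2*n) := ⟨by omega⟩
  intro a
  induction a using Nat.strong_induction_on with
  | _ a IH =>
  intro v w hcyc hlen
  have hbase : 2*a ≤ (ES H {z | z ∈ w.support}).ncard := by
    rw [← hlen]
    exact trail_le_ES w hcyc.isCircuit.isTrail
  rcases Nat.lt_or_ge w.length 6 with hlt | h6
  · have h3 := hcyc.three_le_length
    omega
  · obtain ⟨x, y, hxs, hys, hadj, hne⟩ := hcb v w hcyc h6
    have hxy : x ≠ y := hadj.ne
    set c := w.rotate x hxs with hcdef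
    have hcc : c.IsCycle := hcyc.rotate hxs
    have hclen : c.length = w.length := length_rotate w hxs
    have hedges : ∀ e, e ∈ c.edges ↔ e ∈ w.edges := fun e => (w.rotate_edges x hxs).mem_iff
    have hsupp : ∀ z, z ∈ c.support ↔ z ∈ w.support := fun z => mem_support_rotate_iff hcyc hxs
    have hys' : y ∈ c.support := (hsupp y).mpr hys
    set p := c.takeUntil y hys' with hpdef
    set q := c.dropUntil y hys' with hqdef
    have hspec : p.append q = c := c.take_spec hys'
    have htrail : c.IsTrail := hcc.isCircuit.isTrail
    have hednd : (p.edges ++ q.edges).Nodup := by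
      rw [← Walk.edges_append, hspec]
      exact htrail.edges_nodup
    have hstail : c.support.tail = p.support.tail ++ q.support.tail := by
      conv_lhs => rw [← hspec]
      exact Walk.tail_support_append p q
    have hstnd : (p.support.tail ++ q.support.tail).Nodup := by
      rw [← hstail]
      exact hcc.support_nodup
    obtain ⟨hptnd, hqtnd, hpqdisj⟩ := List.nodup_append.mp hstnd
    have hyp : y ∈ p.support.tail := Walk.end_mem_tail_support_of_ne hxy p
    have hxq : x ∈ q.support.tail := Walk.end_mem_tail_support_of_ne (Ne.symm hxy) q
    have hynq : y ∉ q.support.tail := fun hy' => hpqdisj _ hyp _ hy' rfl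
    have hxnp : x ∉ p.support.tail := fun hx' => hpqdisj _ hx' _ hxq rfl
    have hcne : s(x,y) ∉ c.edges := fun hmem => hne ((hedges _).mp hmem)
    have hpne : s(x,y) ∉ p.edges := fun h =>
      hcne (by rw [← hspec, Walk.edges_append]; exact List.mem_append_left _ h)
    have hqne : s(x,y) ∉ q.edges := fun h =>
      hcne (by rw [← hspec, Walk.edges_append]; exact List.mem_append_right _ h)
    have hqpath : q.IsPath := by
      refine Walk.IsPath.mk' ?_
      rw [Walk.support_eq_cons q]
      exact List.nodup_cons.mpr ⟨hynq, hqtnd⟩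
    have hppath : p.IsPath := by
      refine Walk.IsPath.mk' ?_
      rw [Walk.support_eq_cons p]
      exact List.nodup_cons.mpr ⟨hxnp, hptnd⟩
    have hcyc1 : (q.cons hadj).IsCycle := (Walk.cons_isCycle_iff q hadj).mpr ⟨hqpath, hqne⟩
    have hcyc2 : (p.cons hadj.symm).IsCycle :=
      (Walk.cons_isCycle_iff p hadj.symm).mpr ⟨hppath, by rw [Sym2.eq_swap]; exact hpne⟩
    have hqodd : ¬ Even q.length := length_odd_of_adj hb q hadj.symm
    have hpodd : ¬ Even p.length := length_odd_of_adj hb p hadj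
    have hlensum : p.length + q.length = 2*a := by
      have h1 := congrArg Walk.length hspec
      rw [Walk.length_append] at h1
      omega
    obtain ⟨b1, hb1⟩ : ∃ b1, q.length = 2*b1 + 1 := by
      rcases Nat.even_or_odd q.length with h | h
      · exact absurd h hqodd
      · exact h
    obtain ⟨c1, hc1l⟩ : ∃ c1, p.length = 2*c1 + 1 := by
      rcases Nat.even_or_odd p.length with h | h
      · exact absurd h hpodd
      · exact h
    have hq1 : q.length ≠ 1 := by
      intro h1
      apply hqne
      have e0 : q.getVert 0 = y := q.getVert_zero
      have e1 : q.getVert 1 = x := by rw [← h1]; exact q.getVert_length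
      have hmem : s(q.getVert 0, q.getVert (0+1)) ∈ q.edges := mem_edges_of_lt q (by omega)
      rw [e0, show (0+1 : ℕ) = 1 from rfl, e1] at hmem
      rwa [Sym2.eq_swap] at hmem
    have hp1 : p.length ≠ 1 := by
      intro h1
      apply hpne
      have e0 : p.getVert 0 = x := p.getVert_zero
      have e1 : p.getVert 1 = y := by rw [← h1]; exact p.getVert_length
      have hmem : s(p.getVert 0, p.getVert (0+1)) ∈ p.edges := mem_edges_of_lt p (by omega)
      rwa [e0, show (0+1 : ℕ) = 1 from rfl, e1] at hmem
    have hIH1 := IH (b1+1) (by omega) x (q.cons hadj) hcyc1 (by rw [Walk.length_cons]; omega)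
    have hIH2 := IH (c1+1) (by omega) y (p.cons hadj.symm) hcyc2
      (by rw [Walk.length_cons]; omega)
    have hS1 : {z | z ∈ (q.cons hadj).support} ⊆ {z | z ∈ w.support} := by
      intro z hz
      rw [Set.mem_setOf_eq, Walk.support_cons, List.mem_cons] at hz
      rcases hz with rfl | hz
      · exact hxs
      · exact (hsupp z).mp (Walk.support_dropUntil_subset c hys' hz)
    have hS2 : {z | z ∈ (p.cons hadj.symm).support} ⊆ {z | z ∈ w.support} := by
      intro z hz
      rw [Set.mem_setOf_eq, Walk.support_cons, List.mem_cons] at hz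
      rcases hz with rfl | hz
      · exact hys
      · exact (hsupp z).mp (Walk.support_takeUntil_subset c hys' hz)
    have hES1 : ES H {z | z ∈ (q.cons hadj).support} ⊆ ES H {z | z ∈ w.support} :=
      fun e he => ⟨he.1, fun t ht => hS1 (he.2 t ht)⟩
    have hES2 : ES H {z | z ∈ (p.cons hadj.symm).support} ⊆ ES H {z | z ∈ w.support} :=
      fun e he => ⟨he.1, fun t ht => hS2 (he.2 t ht)⟩
    have hint : ES H {z | z ∈ (q.cons hadj).support} ∩ ES H {z | z ∈ (p.cons hadj.symm).support}
        ⊆ {s(x,y)} := by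
      intro e he
      obtain ⟨⟨heH, he1⟩, ⟨_, he2⟩⟩ := he
      have hkey : ∀ t, t ∈ e → t = x ∨ t = y := by
        intro t ht
        have h1 := he1 t ht
        have h2 := he2 t ht
        rw [Set.mem_setOf_eq, Walk.support_cons, List.mem_cons] at h1 h2
        rcases h1 with rfl | h1
        · exact Or.inl rfl
        rcases h2 with rfl | h2
        · exact Or.inr rfl
        rw [Walk.support_eq_cons q, List.mem_cons] at h1
        rw [Walk.support_eq_cons p, List.mem_cons] at h2
        rcases h1 with rfl | h1
        · exact Or.inr rfl
        rcases h2 with rfl | h2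
        · exact Or.inl rfl
        exact absurd h1 (fun h1' => hpqdisj _ h2 _ h1' rfl)
      induction e with
      | h u t =>
        have hadj' : H.Adj u t := (H.mem_edgeSet).mp heH
        have hu := hkey u (Sym2.mem_mk_left u t)
        have ht := hkey t (Sym2.mem_mk_right u t)
        rw [Set.mem_singleton_iff]
        rcases hu with rfl | rfl <;> rcases ht with rfl | rfl
        · exact absurd rfl hadj'.ne
        · rfl
        · exact Sym2.eq_swap
        · exact absurd rfl hadj'.ne
    have hunion := Set.ncard_union_add_ncard_inter
      (ES H {z | z ∈ (q.cons hadj).support}) (ES H {z | z ∈ (p.cons hadj.symm).support})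
      (Set.toFinite _) (Set.toFinite _)
    have hU : (ES H {z | z ∈ (q.cons hadj).support}
        ∪ ES H {z | z ∈ (p.cons hadj.symm).support}).ncard
        ≤ (ES H {z | z ∈ w.support}).ncard :=
      Set.ncard_le_ncard (Set.union_subset hES1 hES2) (Set.toFinite _)
    have hI : (ES H {z | z ∈ (q.cons hadj).support}
        ∩ ES H {z | z ∈ (p.cons hadj.symm).support}).ncard ≤ 1 := by
      have h1 := Set.ncard_le_ncard hint (Set.toFinite _)
      simpa using h1
    omega

/-! ### The Hamiltonian cycle of `cycleGraph n` -/

lemma one_ne_zero' {n : ℕ} (hn : 1 ≤ n) : (1 : ZMod (2*n)) ≠ 0 := by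
  haveI : NeZero (2*n) := ⟨by omega⟩
  haveI : Fact (1 < 2*n) := ⟨by omega⟩
  intro h
  have := congrArg ZMod.val h
  rw [ZMod.val_one, ZMod.val_zero] at this
  omega

lemma cyc_adj {n : ℕ} (hn : 1 ≤ n) (u : ZMod (2*n)) : (_root_.cycleGraph n).Adj u (u+1) := by
  rw [_root_.cycleGraph, SimpleGraph.fromRel_adj]
  refine ⟨fun h => one_ne_zero' hn ?_, Or.inl rfl⟩
  conv at h => lhs; rw [← add_zero u]
  exact (add_left_cancel h.symm)

/-- The standard walk `↑(2n - m), ↑(2n - m + 1), …, ↑(2n) = 0` in `cycleGraph n`. -/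
def wk (n : ℕ) : (m : ℕ) → (_root_.cycleGraph n).Walk ((2*n - m : ℕ) : ZMod (2*n)) 0
  | 0 => Walk.nil.copy (by simp) rfl
  | (m+1) =>
      if h : m < 2*n then
        (Walk.cons (by
          have h2 : ((2*n - m : ℕ) : ZMod (2*n)) = ((2*n - (m+1) : ℕ) : ZMod (2*n)) + 1 := by
            have h3 : (2*n - (m+1)) + 1 = 2*n - m := by omega
            rw [← h3]; push_cast; ring
          rw [h2]
          exact cyc_adj (by omega) _) (wk n m))
      else (wk n m).copy (by congr 1; omega) rfl

lemma wk_length {n : ℕ} : ∀ m, m ≤ 2*n → (wk n m).length = m := by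
  intro m
  induction m with
  | zero => intro _; simp [wk]
  | succ m ih =>
    intro h
    rw [wk, dif_pos (by omega : m < 2*n), Walk.length_cons, ih (by omega)]

lemma wk_support {n : ℕ} : ∀ m, m ≤ 2*n →
    (wk n m).support = (List.range (m+1)).map (fun i => ((2*n - m + i : ℕ) : ZMod (2*n))) := by
  intro m
  induction m with
  | zero => intro _; simp [wk, Walk.support_copy, List.range_succ, ZMod.natCast_self]
  | succ m ih =>
    intro h
    rw [wk, dif_pos (by omega : m < 2*n), Walk.support_cons, ih (by omega),
      List.range_succ_eq_map (n := m+1), List.map_cons, List.map_map]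
    refine List.cons_eq_cons.mpr ⟨by simp, ?_⟩
    apply List.map_congr_left
    intro i _
    simp only [Function.comp_apply]
    congr 1
    omega

lemma wk_cycle {n : ℕ} (hn : 3 ≤ n) :
    ∃ (w : (_root_.cycleGraph n).Walk (0 : ZMod (2*n)) 0), w.IsCycle ∧ w.length = 2*n ∧
      ∀ z : ZMod (2*n), z ∈ w.support := by
  haveI : NeZero (2*n) := ⟨by omega⟩
  have h0 : ((2*n - 2*n : ℕ) : ZMod (2*n)) = 0 := by norm_num
  have hs : ((wk n (2*n)).copy h0 rfl).support
      = (List.range (2*n+1)).map (fun i => ((i : ℕ) : ZMod (2*n))) := by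
    rw [Walk.support_copy, wk_support _ le_rfl]
    apply List.map_congr_left
    intro i _
    congr 1
    omega
  refine ⟨(wk n (2*n)).copy h0 rfl, ?_, ?_, ?_⟩
  · refine isCycle_of_tail_nodup ?_ ?_
    · rw [Walk.length_copy, wk_length _ le_rfl]; omega
    · rw [hs, List.range_succ_eq_map, List.map_cons, List.tail_cons, List.map_map]
      refine List.Nodup.map_on ?_ List.nodup_range
      intro i hi j hj hij
      rw [List.mem_range] at hi hj
      have h1 := congrArg ZMod.val hij
      simp only [Function.comp_apply] at h1
      rw [ZMod.val_natCast, ZMod.val_natCast] at h1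
      simp only [Nat.succ_eq_add_one] at h1
      rcases Nat.lt_or_ge (i+1) (2*n) with h2 | h2 <;>
        rcases Nat.lt_or_ge (j+1) (2*n) with h3 | h3
      · rw [Nat.mod_eq_of_lt (by omega), Nat.mod_eq_of_lt (by omega)] at h1; omega
      · rw [Nat.mod_eq_of_lt (by omega), (by omega : j + 1 = 2*n), Nat.mod_self] at h1
        omega
      · rw [(by omega : i + 1 = 2*n), Nat.mod_self, Nat.mod_eq_of_lt (by omega)] at h1
        omega
      · omega
  · rw [Walk.length_copy, wk_length _ le_rfl]
  · intro z
    rw [hs, List.mem_map]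
    refine ⟨z.val, List.mem_range.mpr (by have := ZMod.val_lt z; omega), ?_⟩
    simp [ZMod.natCast_val, ZMod.cast_id]

/-! ### The fan graph -/

def chordRel (n : ℕ) (u v : ZMod (2*n)) : Prop :=
  u = 0 ∧ ∃ k, k < n - 2 ∧ v = ((2*k+3 : ℕ) : ZMod (2*n))

def fanGraph (n : ℕ) : SimpleGraph (ZMod (2*n)) :=
  _root_.cycleGraph n ⊔ SimpleGraph.fromRel (chordRel n)

lemma succ_parity {n : ℕ} (hn : 3 ≤ n) (u : ZMod (2*n)) :
    ¬ (Even u.val ↔ Even (u+1).val) := by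
  haveI : NeZero (2*n) := ⟨by omega⟩
  haveI : Fact (1 < 2*n) := ⟨by omega⟩
  have hv : u.val < 2*n := ZMod.val_lt u
  have h1 : (u+1).val = (u.val + 1) % (2*n) := by rw [ZMod.val_add, ZMod.val_one]
  rcases Nat.lt_or_ge (u.val + 1) (2*n) with h2 | h2
  · rw [Nat.mod_eq_of_lt h2] at h1
    rw [h1, Nat.even_iff, Nat.even_iff]
    omega
  · have h3 : u.val + 1 = 2*n := by omega
    rw [h3, Nat.mod_self] at h1
    rw [h1, Nat.even_iff, Nat.even_iff]
    omega

lemma fan_respects {n : ℕ} (hn : 3 ≤ n) : RespectsBipartition (fanGraph n) := by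
  haveI : NeZero (2*n) := ⟨by omega⟩
  intro u v h
  rw [fanGraph, SimpleGraph.sup_adj] at h
  rcases h with h | h
  · rw [_root_.cycleGraph, SimpleGraph.fromRel_adj] at h
    rcases h.2 with h2 | h2
    · rw [h2]; exact succ_parity hn u
    · rw [h2]; intro hiff; exact succ_parity hn v hiff.symm
  · rw [SimpleGraph.fromRel_adj] at h
    rcases h.2 with ⟨rfl, k, hk, rfl⟩ | ⟨rfl, k, hk, rfl⟩ <;>
    · rw [ZMod.val_zero, ZMod.val_cast_of_lt (by omega : 2*k+3 < 2*n),
        Nat.even_iff, Nat.even_iff]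
      omega

lemma fan_adj_odd {n : ℕ} (hn : 3 ≤ n) (z : ZMod (2*n)) (hz : ¬ Even z.val) :
    (fanGraph n).Adj 0 z := by
  haveI : NeZero (2*n) := ⟨by omega⟩
  have hv : z.val < 2*n := ZMod.val_lt z
  have hz0 : z ≠ 0 := by
    intro h; apply hz; rw [h, ZMod.val_zero]; exact Even.zero
  have hcast : ((z.val : ℕ) : ZMod (2*n)) = z := by simp [ZMod.natCast_val, ZMod.cast_id]
  rw [Nat.even_iff] at hz
  rw [fanGraph, SimpleGraph.sup_adj]
  rcases eq_or_ne z.val 1 with h1 | h1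
  · left
    rw [_root_.cycleGraph, SimpleGraph.fromRel_adj]
    refine ⟨Ne.symm hz0, Or.inl ?_⟩
    rw [← hcast, h1]
    simp
  · rcases eq_or_ne z.val (2*n - 1) with h2 | h2
    · left
      rw [_root_.cycleGraph, SimpleGraph.fromRel_adj]
      refine ⟨Ne.symm hz0, Or.inr ?_⟩
      rw [← hcast, h2]
      have h3 : ((2*n - 1 : ℕ) : ZMod (2*n)) + 1 = ((2*n - 1 + 1 : ℕ) : ZMod (2*n)) := by
        push_cast; ring
      rw [h3, (by omega : 2*n - 1 + 1 = 2*n), ZMod.natCast_self]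
    · right
      rw [SimpleGraph.fromRel_adj]
      have hodd : z.val % 2 = 1 := by omega
      have h4 : 3 ≤ z.val := by omega
      have h5 : z.val ≤ 2*n - 3 := by omega
      refine ⟨Ne.symm hz0, Or.inl ⟨rfl, (z.val - 3)/2, by omega, ?_⟩⟩
      rw [show 2*((z.val - 3)/2)+3 = z.val by omega]
      exact hcast.symm

lemma fan_adj_ne_zero {n : ℕ} (hn : 3 ≤ n) {x z : ZMod (2*n)} (hx : x ≠ 0) (hz : z ≠ 0)
    (h : (fanGraph n).Adj x z) : z = x + 1 ∨ x = z + 1 := by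
  rw [fanGraph, SimpleGraph.sup_adj] at h
  rcases h with h | h
  · rw [_root_.cycleGraph, SimpleGraph.fromRel_adj] at h
    exact h.2
  · rw [SimpleGraph.fromRel_adj] at h
    rcases h.2 with ⟨h0, _⟩ | ⟨h0, _⟩
    · exact absurd h0 hx
    · exact absurd h0 hz

lemma fan_chordal {n : ℕ} (hn : 3 ≤ n) : ChordalBipartite (fanGraph n) := by
  haveI : NeZero (2*n) := ⟨by omega⟩
  haveI : Fact (1 < 2*n) := ⟨by omega⟩
  intro v w hcyc h6
  by_cases h0 : (0 : ZMod (2*n)) ∈ w.support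
  · -- the cycle passes through `0`: chord from `0` to the fourth vertex
    set c := w.rotate 0 h0 with hc
    have hcc : c.IsCycle := hcyc.rotate h0
    have hlen : c.length = w.length := length_rotate w h0
    have hgL : c.getVert c.length = 0 := c.getVert_length
    have hy3 : ¬ Even ((c.getVert 3).val) := by
      intro hcon
      rw [getVert_parity (fan_respects hn) c 3 (by omega), ZMod.val_zero] at hcon
      have h1 : Even 3 := hcon.mp Even.zero
      rw [Nat.even_iff] at h1
      omega
    have hadj : (fanGraph n).Adj 0 (c.getVert 3) := fan_adj_odd hn _ hy3
    have hy_mem : c.getVert 3 ∈ c.support := getVert_mem_support c (by omega)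
    have hnotmem : s(0, c.getVert 3) ∉ w.edges := by
      intro hmem
      have hmem' : s(0, c.getVert 3) ∈ c.edges := (w.rotate_edges 0 h0).mem_iff.mpr hmem
      rw [walk_edges_eq] at hmem'
      obtain ⟨i, hi, hieq⟩ := List.mem_map.mp hmem'
      rw [List.mem_range] at hi
      rw [Sym2.eq_iff] at hieq
      rcases hieq with ⟨ha, hb⟩ | ⟨ha, hb⟩
      · rcases Nat.eq_zero_or_pos i with rfl | hip
        · have h13 : (1 : ℕ) = 3 := cycle_getVert_inj hcc (by omega) (by omega) (by omega)
            (by omega) hb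
          omega
        · have : i = c.length := cycle_getVert_inj hcc (by omega) (by omega) (by omega)
            le_rfl (ha.trans hgL.symm)
          omega
      · have h1 : i + 1 = c.length := cycle_getVert_inj hcc (by omega) (by omega) (by omega)
          le_rfl (hb.trans hgL.symm)
        have h2 : i = 3 := cycle_getVert_inj hcc (by omega) (by omega) (by omega)
          (by omega) ha
        omega
    exact ⟨0, c.getVert 3, h0, (mem_support_rotate_iff hcyc h0).mp hy_mem, hadj, hnotmem⟩
  · -- the cycle avoids `0`: impossible
    exfalso
    have hne : w.support.toFinset.Nonempty := ⟨v, by simp [Walk.start_mem_support]⟩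
    obtain ⟨x, hxs, hxmax⟩ := w.support.toFinset.exists_max_image ZMod.val hne
    rw [List.mem_toFinset] at hxs
    set c := w.rotate x hxs with hc
    have hcc : c.IsCycle := hcyc.rotate hxs
    have hlen : c.length = w.length := length_rotate w hxs
    have hg0 : c.getVert 0 = x := c.getVert_zero
    have hgL : c.getVert c.length = x := c.getVert_length
    have he1 : s(c.getVert 0, c.getVert 1) ∈ c.edges := mem_edges_of_lt c (by omega)
    have he2 : s(c.getVert (c.length - 1), c.getVert (c.length - 1 + 1)) ∈ c.edges :=
      mem_edges_of_lt c (by omega)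
    rw [(by omega : c.length - 1 + 1 = c.length), hgL] at he2
    rw [hg0] at he1
    have hz1mem : c.getVert 1 ∈ w.support :=
      (mem_support_rotate_iff hcyc hxs).mp (getVert_mem_support c (by omega))
    have hz2mem : c.getVert (c.length - 1) ∈ w.support :=
      (mem_support_rotate_iff hcyc hxs).mp (getVert_mem_support c (by omega))
    have hadj1 : (fanGraph n).Adj x (c.getVert 1) := by
      have h := c.edges_subset_edgeSet he1
      rwa [SimpleGraph.mem_edgeSet] at h
    have hadj2 : (fanGraph n).Adj (c.getVert (c.length - 1)) x := by
      have h := c.edges_subset_edgeSet he2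
      rwa [SimpleGraph.mem_edgeSet] at h
    have hx0 : x ≠ 0 := fun h => h0 (h ▸ hxs)
    have hz10 : c.getVert 1 ≠ 0 := fun h => h0 (h ▸ hz1mem)
    have hz20 : c.getVert (c.length - 1) ≠ 0 := fun h => h0 (h ▸ hz2mem)
    have hd1 := fan_adj_ne_zero hn hx0 hz10 hadj1
    have hd2 := fan_adj_ne_zero hn hx0 hz20 hadj2.symm
    have hz12 : c.getVert 1 ≠ c.getVert (c.length - 1) := by
      intro h
      have h1 : (1 : ℕ) = c.length - 1 := cycle_getVert_inj hcc (by omega) (by omega)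
        (by omega) (by omega) h
      omega
    have hx1mem : x + 1 ∈ w.support := by
      rcases hd1 with h | h
      · rw [← h]; exact hz1mem
      · rcases hd2 with h' | h'
        · rw [← h']; exact hz2mem
        · exfalso
          apply hz12
          have h2 : c.getVert 1 + 1 = c.getVert (c.length - 1) + 1 := by rw [← h, ← h']
          exact add_right_cancel h2
    have hmax := hxmax (x+1) (List.mem_toFinset.mpr hx1mem)
    have hx10 : x + 1 ≠ 0 := fun h => h0 (h ▸ hx1mem)
    have hva : (x+1).val = (x.val + 1) % (2*n) := by rw [ZMod.val_add, ZMod.val_one]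
    have hvx : x.val < 2*n := ZMod.val_lt x
    rcases Nat.lt_or_ge (x.val+1) (2*n) with hlt | hge
    · rw [Nat.mod_eq_of_lt hlt] at hva
      omega
    · rw [(by omega : x.val + 1 = 2*n), Nat.mod_self] at hva
      exact hx10 ((ZMod.val_eq_zero _).mp hva)

lemma fan_card {n : ℕ} (hn : 3 ≤ n) :
    Nat.card (fanGraph n).edgeSet = Nat.card (_root_.cycleGraph n).edgeSet + (n - 2) := by
  haveI : NeZero (2*n) := ⟨by omega⟩
  haveI : Fact (1 < 2*n) := ⟨by omega⟩
  have hchord : (SimpleGraph.fromRel (chordRel n)).edgeSet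
      = (fun k : ℕ => s((0 : ZMod (2*n)), ((2*k+3 : ℕ) : ZMod (2*n)))) '' (Set.Iio (n-2)) := by
    ext e
    constructor
    · intro he
      induction e with
      | h u v =>
        rw [SimpleGraph.mem_edgeSet, SimpleGraph.fromRel_adj] at he
        rcases he.2 with ⟨rfl, k, hk, rfl⟩ | ⟨rfl, k, hk, rfl⟩
        · exact ⟨k, hk, rfl⟩
        · exact ⟨k, hk, Sym2.eq_swap⟩
    · rintro ⟨k, hk, rfl⟩
      have hk' : k < n - 2 := hk
      rw [SimpleGraph.mem_edgeSet, SimpleGraph.fromRel_adj]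
      have hval : ((2*k+3 : ℕ) : ZMod (2*n)).val = 2*k+3 := ZMod.val_cast_of_lt (by omega)
      refine ⟨fun h0 => ?_, Or.inl ⟨rfl, k, hk', rfl⟩⟩
      have h1 := congrArg ZMod.val h0
      rw [ZMod.val_zero, hval] at h1
      omega
  have hdisj : Disjoint (_root_.cycleGraph n).edgeSet
      (SimpleGraph.fromRel (chordRel n)).edgeSet := by
    rw [Set.disjoint_left]
    intro e he hce
    rw [hchord] at hce
    obtain ⟨k, hk, rfl⟩ := hce
    have hk' : k < n - 2 := hk
    rw [SimpleGraph.mem_edgeSet, _root_.cycleGraph, SimpleGraph.fromRel_adj] at he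
    have hval : ((2*k+3 : ℕ) : ZMod (2*n)).val = 2*k+3 := ZMod.val_cast_of_lt (by omega)
    rcases he.2 with h1 | h1
    · have h2 := congrArg ZMod.val h1
      rw [hval, zero_add, ZMod.val_one] at h2
      omega
    · have h2 : ((2*k+3 : ℕ) : ZMod (2*n)) + 1 = ((2*k+4 : ℕ) : ZMod (2*n)) := by
        push_cast; ring
      rw [h2] at h1
      have h3 := congrArg ZMod.val h1
      rw [ZMod.val_zero, ZMod.val_cast_of_lt (by omega : 2*k+4 < 2*n)] at h3
      omega
  have himg : ((fun k : ℕ => s((0 : ZMod (2*n)), ((2*k+3 : ℕ) : ZMod (2*n)))) ''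
      (Set.Iio (n-2))).ncard = n - 2 := by
    rw [Set.ncard_image_of_injOn, ← Finset.coe_Iio, Set.ncard_coe_finset, Nat.card_Iio]
    intro a ha b hb hab
    have ha' : a < n-2 := ha
    have hb' : b < n-2 := hb
    rw [Sym2.eq_iff] at hab
    rcases hab with ⟨_, h2⟩ | ⟨h1, _⟩
    · have h3 := congrArg ZMod.val h2
      rw [ZMod.val_cast_of_lt (by omega), ZMod.val_cast_of_lt (by omega)] at h3
      omega
    · have h3 := congrArg ZMod.val h1
      rw [ZMod.val_zero, ZMod.val_cast_of_lt (by omega)] at h3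
      omega
  have e1 : Nat.card (fanGraph n).edgeSet = ((fanGraph n).edgeSet).ncard :=
    Nat.card_coe_set_eq _
  have e2 : Nat.card (_root_.cycleGraph n).edgeSet = ((_root_.cycleGraph n).edgeSet).ncard :=
    Nat.card_coe_set_eq _
  rw [e1, e2, fanGraph, SimpleGraph.edgeSet_sup,
    Set.ncard_union_eq hdisj (Set.toFinite _) (Set.toFinite _), hchord, himg]

lemma cyc_card_le {n : ℕ} (hn : 3 ≤ n) : Nat.card (_root_.cycleGraph n).edgeSet ≤ 2*n := by
  haveI : NeZero (2*n) := ⟨by omega⟩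
  have hsub : (_root_.cycleGraph n).edgeSet
      ⊆ Set.range (fun u : ZMod (2*n) => s(u, u+1)) := by
    intro e he
    induction e with
    | h u v =>
      rw [SimpleGraph.mem_edgeSet, _root_.cycleGraph, SimpleGraph.fromRel_adj] at he
      rcases he.2 with h1 | h1
      · exact ⟨u, by rw [h1]⟩
      · exact ⟨v, by rw [h1, Sym2.eq_swap]⟩
  calc Nat.card (_root_.cycleGraph n).edgeSet
      = (_root_.cycleGraph n).edgeSet.ncard := Nat.card_coe_set_eq _
    _ ≤ (Set.range fun u : ZMod (2*n) => s(u, u+1)).ncard :=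
        Set.ncard_le_ncard hsub (Set.toFinite _)
    _ ≤ (Set.univ : Set (ZMod (2*n))).ncard := by
        rw [← Set.image_univ]; exact Set.ncard_image_le (Set.toFinite _)
    _ = 2*n := by rw [Set.ncard_univ, Nat.card_eq_fintype_card, ZMod.card]

end MinChords

/-- The minimum number of bipartition-respecting chords whose addition makes the
even chordless cycle `C_{2n}` (`n ≥ 3`) chordal bipartite is exactly `n - 2`. -/
theorem min_chords_to_chordal_bipartite (n : ℕ) (hn : 3 ≤ n) :
    (∃ H : SimpleGraph (ZMod (2 * n)), cycleGraph n ≤ H ∧ RespectsBipartition H ∧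
      Nat.card H.edgeSet = Nat.card (cycleGraph n).edgeSet + (n - 2) ∧
      ChordalBipartite H) ∧
    (∀ H : SimpleGraph (ZMod (2 * n)), cycleGraph n ≤ H → RespectsBipartition H →
      ChordalBipartite H →
      Nat.card (cycleGraph n).edgeSet + (n - 2) ≤ Nat.card H.edgeSet) := by
  haveI : NeZero (2*n) := ⟨by omega⟩
  constructor
  · exact ⟨MinChords.fanGraph n, le_sup_left, MinChords.fan_respects hn, MinChords.fan_card hn,
      MinChords.fan_chordal hn⟩
  · intro H hle hb hcb
    obtain ⟨w, hwc, hwl, hws⟩ := MinChords.wk_cycle hn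
    have hcyc : (w.mapLe hle).IsCycle := hwc.mapLe hle
    have hlen : (w.mapLe hle).length = 2*n := by
      rw [SimpleGraph.Walk.length_map, hwl]
    have hsupp : ∀ z : ZMod (2*n), z ∈ (w.mapLe hle).support := by
      intro z
      have := hws z
      rw [SimpleGraph.Walk.support_map]
      have hid : ⇑(SimpleGraph.Hom.ofLE hle) = id := rfl
      rw [hid, List.map_id]
      exact this
    have hkey := MinChords.key hn hb hcb n 0 (w.mapLe hle) hcyc hlen
    have hES : MinChords.ES H {z | z ∈ (w.mapLe hle).support} = H.edgeSet := by
      ext e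
      simp only [MinChords.ES, Set.mem_setOf_eq, Set.mem_sep_iff]
      exact ⟨fun h => h.1, fun h => ⟨h, fun x _ => hsupp x⟩⟩
    rw [hES] at hkey
    have h1 : (H.edgeSet).ncard = Nat.card H.edgeSet := (Nat.card_coe_set_eq _).symm
    have h2 := MinChords.cyc_card_le hn
    omega
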